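/- Let ν be a positive Borel measure on ℂ^n such that the function z ↦ (πt)^{-n} ∫ exp(−|z−w|²/t) dν(w) is bounded on ℂ^n. Then there exists C > 0 such that ν(B(z,1)) ≤ C for all z ∈ ℂ^n. -/

import Mathlib

open MeasureTheory Complex Filter Metric
open scoped ENNReal

noncomputable section

/-- `ℂⁿ`. -/
abbrev Cn (n : ℕ) := Fin n → ℂ

/-- Squared Euclidean norm `|z|²` on `ℂⁿ`. -/
def hnorm2 {n : ℕ} (z : Cn n) : ℝ := ∑ i, Complex.normSq (z i)

/-- Hermitian inner product `z ⬝ conj w` on `ℂⁿ`. -/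
def hinner {n : ℕ} (z w : Cn n) : ℂ := ∑ i, z i * (starRingEnd ℂ) (w i)

/-- The Euclidean open ball of radius `R` about `z` in `ℂⁿ`. -/
def cEball {n : ℕ} (z : Cn n) (R : ℝ) : Set (Cn n) := {w | Real.sqrt (hnorm2 (w - z)) < R}

/-- The Gaussian probability measure `dμ_t(z) = (πt)^{-n} exp(-|z|²/t) dz`. -/
def gaussianMeasure (n : ℕ) (t : ℝ) : Measure (Cn n) :=
  MeasureTheory.volume.withDensity fun z =>
    ENNReal.ofReal (((Real.pi * t) ^ n)⁻¹ * Real.exp (-(hnorm2 z) / t))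

/-- The reproducing kernel `K_z^t(w) = exp(w ⬝ conj z / t)`. -/
def FockKer (n : ℕ) (t : ℝ) (z : Cn n) : Cn n → ℂ :=
  fun w => Complex.exp (hinner w z / t)

/-- The normalized reproducing kernel `k_z^t(w) = exp(w ⬝ conj z / t - |z|²/(2t))`. -/
def normKer (n : ℕ) (t : ℝ) (z : Cn n) : Cn n → ℂ :=
  fun w => Complex.exp (hinner w z / t - hnorm2 z / (2 * t))

/-- Membership in the Fock space `F_t²`: entire and square-integrable w.r.t. `μ_t`. -/
def InFock (n : ℕ) (t : ℝ) (f : Cn n → ℂ) : Prop :=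
  AnalyticOnNhd ℂ f Set.univ ∧ MemLp f 2 (gaussianMeasure n t)

/-- The Weyl operator `(W_z^t g)(w) = k_z^t(w) g(w - z)` acting on functions. -/
def Weyl (n : ℕ) (t : ℝ) (z : Cn n) (g : Cn n → ℂ) : Cn n → ℂ :=
  fun w => normKer n t z w * g (w - z)

/-- The symbol `h_z^t(w) = exp(2 i Im(w ⬝ conj z)/t)`. -/
def hFun (n : ℕ) (t : ℝ) (z : Cn n) : Cn n → ℂ :=
  fun w => Complex.exp (2 * Complex.I * ((hinner w z).im : ℂ) / t)

/-- The Fock space `F_t²` as a subspace of `L²(ℂⁿ, μ_t)`: elements having an entire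
representative. -/
def FockLp (n : ℕ) (t : ℝ) : Submodule ℂ (Lp ℂ 2 (gaussianMeasure n t)) where
  carrier := {f | ∃ g : Cn n → ℂ, AnalyticOnNhd ℂ g Set.univ ∧
    (f : Cn n → ℂ) =ᵐ[gaussianMeasure n t] g}
  zero_mem' := ⟨0, analyticOnNhd_const, Lp.coeFn_zero _ _ _⟩
  add_mem' := by
    rintro f f' ⟨g, hg, hfg⟩ ⟨g', hg', hfg'⟩
    exact ⟨g + g', hg.add hg', (Lp.coeFn_add f f').trans (hfg.add hfg')⟩
  smul_mem' := by
    rintro c f ⟨g, hg, hfg⟩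
    refine ⟨c • g, ?_, (Lp.coeFn_smul c f).trans (hfg.const_smul c)⟩
    simpa [Pi.smul_def, smul_eq_mul] using analyticOnNhd_const.mul hg

/-- The Fock space as a Hilbert-space type. -/
abbrev FockH (n : ℕ) (t : ℝ) := ↥(FockLp n t)

/-- `P` is the orthogonal projection of `L²(μ_t)` onto the Fock space. -/
def IsFockProjection (n : ℕ) (t : ℝ)
    (P : Lp ℂ 2 (gaussianMeasure n t) →L[ℂ] Lp ℂ 2 (gaussianMeasure n t)) : Prop :=
  (∀ u, P u ∈ FockLp n t) ∧ (∀ u ∈ FockLp n t, P u = u) ∧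
    (∀ u, ∀ v ∈ FockLp n t, (inner ℂ (u - P u) v : ℂ) = 0)

/-- A Fredholm operator: finite-dimensional kernel, closed range, finite-dimensional cokernel. -/
def IsFredholm {H : Type*} [NormedAddCommGroup H] [NormedSpace ℂ H]
    (T : H →L[ℂ] H) : Prop :=
  FiniteDimensional ℂ (LinearMap.ker (T : H →ₗ[ℂ] H)) ∧ IsClosed (LinearMap.range (T : H →ₗ[ℂ] H) : Set H) ∧
    FiniteDimensional ℂ (H ⧸ LinearMap.range (T : H →ₗ[ℂ] H))

/-- The essential spectrum `σ_ess(A) = {λ : A - λ is not Fredholm}`. -/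
def essSpectrum {H : Type*} [NormedAddCommGroup H] [NormedSpace ℂ H]
    (A : H →L[ℂ] H) : Set ℂ :=
  {lam | ¬ IsFredholm (A - lam • (1 : H →L[ℂ] H))}

/-- The essential norm: the distance to the compact operators. -/
def essNorm {H : Type*} [NormedAddCommGroup H] [NormedSpace ℂ H]
    (T : H →L[ℂ] H) : ℝ :=
  sInf {c : ℝ | ∃ K : H →L[ℂ] H, IsCompactOperator K ∧ c = ‖T - K‖}

/-- if the Gaussian heat transform `z ↦ (πt)^{-n} ∫ exp(-|z-w|²/t) dν(w)` of a
positive Borel measure `ν` is bounded, then `ν` is uniformly bounded on unit balls. -/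
theorem carleson_of_bounded_heat_transform (n : ℕ) (hn : 1 ≤ n) (t : ℝ) (ht : 0 < t)
    (nu : Measure (Cn n)) (B : ℝ)
    (h : ∀ z : Cn n,
      ∫⁻ w, ENNReal.ofReal (((Real.pi * t) ^ n)⁻¹ * Real.exp (-(hnorm2 (z - w)) / t)) ∂nu
        ≤ ENNReal.ofReal B) :
    ∃ C : ℝ, 0 < C ∧ ∀ z : Cn n, nu (cEball z 1) ≤ ENNReal.ofReal C := by
  have hπt : 0 < Real.pi * t := mul_pos Real.pi_pos ht
  set c : ℝ := ((Real.pi * t) ^ n)⁻¹ * Real.exp (-(1:ℝ) / t) with hc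
  have hcpos : 0 < c := mul_pos (inv_pos.2 (pow_pos hπt n)) (Real.exp_pos _)
  refine ⟨max (B / c) 1, lt_of_lt_of_le one_pos (le_max_right _ _), fun z => ?_⟩
  have hcont : Continuous fun w : Cn n => Real.sqrt (hnorm2 (w - z)) := by
    apply Real.continuous_sqrt.comp
    unfold hnorm2
    exact continuous_finset_sum _ fun i _ =>
      Complex.continuous_normSq.comp ((continuous_apply i).sub continuous_const)
  have hmeas : MeasurableSet (cEball z 1) :=
    (isOpen_lt hcont continuous_const).measurableSet
  -- lower bound the integral over the ball
  have key : ENNReal.ofReal c * nu (cEball z 1) ≤ ENNReal.ofReal B := by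
    refine le_trans ?_ (h z)
    have := MeasureTheory.lintegral_indicator (μ := nu)
      (f := fun _ : Cn n => ENNReal.ofReal c) hmeas
    rw [← MeasureTheory.setLIntegral_const (cEball z 1) (ENNReal.ofReal c)]
    rw [← MeasureTheory.lintegral_indicator hmeas]
    refine MeasureTheory.lintegral_mono fun w => ?_
    by_cases hw : w ∈ cEball z 1
    · rw [Set.indicator_of_mem hw]
      refine ENNReal.ofReal_le_ofReal ?_
      refine mul_le_mul_of_nonneg_left ?_ (inv_nonneg.2 (pow_nonneg hπt.le n))
      apply Real.exp_le_exp.2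
      have hw1 : Real.sqrt (hnorm2 (w - z)) < 1 := hw
      have hnn : 0 ≤ hnorm2 (w - z) := Finset.sum_nonneg fun i _ => Complex.normSq_nonneg _
      have h1 : hnorm2 (w - z) < 1 := by
        nlinarith [Real.sq_sqrt hnn, Real.sqrt_nonneg (hnorm2 (w - z))]
      have hsym : hnorm2 (z - w) = hnorm2 (w - z) := by
        unfold hnorm2
        refine Finset.sum_congr rfl fun i _ => ?_
        have : (z - w) i = -((w - z) i) := by simp [Pi.sub_apply]
        rw [this, Complex.normSq_neg]
      have : -1 ≤ -hnorm2 (z - w) := by rw [hsym]; linarith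
      gcongr
    · rw [Set.indicator_of_notMem hw]; exact zero_le
  have hne : ENNReal.ofReal c ≠ 0 := by
    simp [ENNReal.ofReal_eq_zero, not_le, hcpos]
  have : nu (cEball z 1) ≤ ENNReal.ofReal B / ENNReal.ofReal c :=
    (ENNReal.le_div_iff_mul_le (Or.inl hne) (Or.inl ENNReal.ofReal_ne_top)).2
      (by rwa [mul_comm])
  refine this.trans ?_
  rw [← ENNReal.ofReal_div_of_pos hcpos]
  exact ENNReal.ofReal_le_ofReal (le_max_left _ _)

end
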